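/- arXiv:2208.07676 — 4 statements merged into one kernel-verified Lean document; each statement's English description precedes it below -/
import Mathlib

section
/- Let q ≥ 3 be a prime power and let L be a finite-dimensional 3-step nilpotent stem Lie algebra over 𝔽_q of breadth type (0,n) for some n ≥ 1. Let B_{L'} = {x ∈ L : C_{L'}(x) = Z(L)}, where C_{L'}(x) = {y ∈ L' : [x,y] = 0}. Then the 𝔽_q-linear span of B_{L'} equals L. -/
open Module

section BasicDefs

/-- The centralizer of `x` in a Lie algebra, as a submodule. -/
def lieCentralizer (K : Type*) [CommRing K] {L : Type*} [LieRing L] [LieAlgebra K L]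
    (x : L) : Submodule K L where
  carrier := {y : L | ⁅x, y⁆ = 0}
  add_mem' := by
    intro a b ha hb
    simp only [Set.mem_setOf_eq, lie_add] at *
    rw [ha, hb, add_zero]
  zero_mem' := by simp
  smul_mem' := by
    intro c a ha
    simp only [Set.mem_setOf_eq, lie_smul] at *
    rw [ha, smul_zero]

/-- The center of a Lie algebra, as a submodule. -/
def lieCenterSub (K : Type*) [CommRing K] (L : Type*) [LieRing L] [LieAlgebra K L] :
    Submodule K L where
  carrier := {z : L | ∀ y : L, ⁅z, y⁆ = 0}
  add_mem' := by
    intro a b ha hb y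
    rw [add_lie, ha y, hb y, add_zero]
  zero_mem' := fun y => zero_lie y
  smul_mem' := by
    intro c a ha y
    rw [smul_lie, ha y, smul_zero]

/-- `gammaSub K L k` is the `(k+1)`-st term `γ_{k+1}(L)` of the lower central series, so that
`gammaSub K L 0 = γ₁(L) = L` and `γ_{i+1}(L) = [L, γ_i(L)]`. -/
def gammaSub (K : Type*) [CommRing K] (L : Type*) [LieRing L] [LieAlgebra K L] :
    ℕ → Submodule K L
  | 0 => ⊤
  | k + 1 => Submodule.span K {z : L | ∃ x : L, ∃ y ∈ gammaSub K L k, ⁅x, y⁆ = z}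

/-- The derived subalgebra `L' = [L, L]` as a submodule. -/
def derivedSub (K : Type*) [CommRing K] (L : Type*) [LieRing L] [LieAlgebra K L] :
    Submodule K L :=
  gammaSub K L 1

/-- `L` is 3-step nilpotent: `γ₄(L) = 0` and `γ₃(L) ≠ 0`. -/
def IsThreeStepNilpotentAlg (K : Type*) [CommRing K] (L : Type*) [LieRing L]
    [LieAlgebra K L] : Prop :=
  gammaSub K L 3 = ⊥ ∧ gammaSub K L 2 ≠ ⊥

/-- `L` is a stem Lie algebra: `Z(L) ⊆ L'`. -/
def IsStemAlg (K : Type*) [CommRing K] (L : Type*) [LieRing L] [LieAlgebra K L] : Prop :=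
  lieCenterSub K L ≤ derivedSub K L

/-- The breadth of an element: `dim L - dim C_L(x)`. -/
noncomputable def lieBreadth (K : Type*) [CommRing K] {L : Type*} [LieRing L]
    [LieAlgebra K L] (x : L) : ℕ :=
  finrank K L - finrank K (lieCentralizer K x)

/-- `L` has breadth type `(0, n)`: `L` is non-abelian and every non-central element has
breadth exactly `n`. -/
def HasBreadthTypeZeroN (K : Type*) [CommRing K] (L : Type*) [LieRing L] [LieAlgebra K L]
    (n : ℕ) : Prop :=
  (∃ a b : L, ⁅a, b⁆ ≠ 0) ∧ ∀ x : L, x ∉ lieCenterSub K L → lieBreadth K x = n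

/-- The image `[x, L]` of `ad x`, as a submodule. -/
def adImage (K : Type*) [CommRing K] {L : Type*} [LieRing L] [LieAlgebra K L] (x : L) :
    Submodule K L where
  carrier := {z : L | ∃ y : L, ⁅x, y⁆ = z}
  add_mem' := by
    rintro a b ⟨ya, rfl⟩ ⟨yb, rfl⟩
    exact ⟨ya + yb, lie_add x ya yb⟩
  zero_mem' := ⟨0, lie_zero x⟩
  smul_mem' := by
    rintro c a ⟨y, rfl⟩
    exact ⟨c • y, lie_smul c x y⟩

/-- `L` is a Camina Lie algebra: `[x, L] = L'` for every `x ∉ L'`. -/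
def IsCaminaAlg (K : Type*) [CommRing K] (L : Type*) [LieRing L] [LieAlgebra K L] : Prop :=
  ∀ x : L, x ∉ derivedSub K L → adImage K x = derivedSub K L

end BasicDefs

section G5

/-- The underlying type of the Lie algebra `𝔤_m`: quintuples over `R`. -/
abbrev G5 (R : Type*) := R × R × R × R × R

namespace G5

variable {R : Type*} [CommRing R]

/-- The bracket `[(a,b,c,d,e),(x,y,z,u,v)] = (0,0, ay-bx, ay-bx+2cx-2az, ay-bx+2bz-2cy)`. -/
def br (P Q : G5 R) : G5 R :=
  (0, 0,
    P.1 * Q.2.1 - P.2.1 * Q.1,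
    P.1 * Q.2.1 - P.2.1 * Q.1 + 2 * P.2.2.1 * Q.1 - 2 * P.1 * Q.2.2.1,
    P.1 * Q.2.1 - P.2.1 * Q.1 + 2 * P.2.1 * Q.2.2.1 - 2 * P.2.2.1 * Q.2.1)

private lemma add_br (P Q N : G5 R) : br (P + Q) N = br P N + br Q N := by
  obtain ⟨a, b, c, d, e⟩ := P
  obtain ⟨a', b', c', d', e'⟩ := Q
  obtain ⟨x, y, z, u, v⟩ := N
  simp only [br, Prod.mk_add_mk, Prod.mk.injEq]
  and_intros <;> ring

private lemma br_add (P Q N : G5 R) : br P (Q + N) = br P Q + br P N := by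
  obtain ⟨a, b, c, d, e⟩ := P
  obtain ⟨a', b', c', d', e'⟩ := Q
  obtain ⟨x, y, z, u, v⟩ := N
  simp only [br, Prod.mk_add_mk, Prod.mk.injEq]
  and_intros <;> ring

private lemma br_self (P : G5 R) : br P P = 0 := by
  obtain ⟨a, b, c, d, e⟩ := P
  simp only [br, Prod.mk_eq_zero]
  and_intros <;> first | trivial | ring

private lemma br_leibniz (P Q N : G5 R) : br P (br Q N) = br (br P Q) N + br Q (br P N) := by
  obtain ⟨a, b, c, d, e⟩ := P
  obtain ⟨a', b', c', d', e'⟩ := Q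
  obtain ⟨x, y, z, u, v⟩ := N
  simp only [br, Prod.mk_add_mk, Prod.mk.injEq]
  and_intros <;> ring

instance (priority := 2000) instLieRing : LieRing (G5 R) :=
  { (inferInstance : AddCommGroup (G5 R)) with
    bracket := br
    add_lie := add_br
    lie_add := br_add
    lie_self := br_self
    leibniz_lie := br_leibniz }

@[simp] lemma bracket_def (P Q : G5 R) : ⁅P, Q⁆ = br P Q := rfl

variable {K : Type*} [CommRing K] [Algebra K R]

private lemma br_smul (t : K) (P Q : G5 R) : br P (t • Q) = t • br P Q := by
  obtain ⟨a, b, c, d, e⟩ := P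
  obtain ⟨x, y, z, u, v⟩ := Q
  simp only [br, Prod.smul_mk, Prod.mk.injEq]
  and_intros <;> simp only [Algebra.smul_def] <;> ring

instance (priority := 2000) instLieAlgebra : LieAlgebra K (G5 R) :=
  { (inferInstance : Module K (G5 R)) with
    lie_smul := br_smul }

end G5

end G5

section U3

private lemma mul_strictUpper {K' : Type*} [CommRing K'] {M N : Matrix (Fin 3) (Fin 3) K'}
    (hM : ∀ i j : Fin 3, j ≤ i → M i j = 0) (hN : ∀ i j : Fin 3, j ≤ i → N i j = 0) :
    ∀ i j : Fin 3, j ≤ i → (M * N) i j = 0 := by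
  intro i j hij
  rw [Matrix.mul_apply]
  apply Finset.sum_eq_zero
  intro k _
  rcases le_or_gt k i with h | h
  · rw [hM i k h, zero_mul]
  · rw [hN k j (hij.trans h.le), mul_zero]

attribute [local instance] LieRing.ofAssociativeRing

/-- The Lie algebra (over `K`) of 3×3 strictly upper triangular matrices with entries
in `K'`, with bracket `[A, B] = AB - BA`. -/
def U3 (K K' : Type*) [CommRing K] [CommRing K'] [Algebra K K'] :
    LieSubalgebra K (Matrix (Fin 3) (Fin 3) K') where
  carrier := {M : Matrix (Fin 3) (Fin 3) K' | ∀ i j : Fin 3, j ≤ i → M i j = 0}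
  add_mem' := by
    intro a b ha hb i j hij
    simp only [Matrix.add_apply, ha i j hij, hb i j hij, add_zero]
  zero_mem' := fun i j _ => rfl
  smul_mem' := by
    intro c M hM i j hij
    simp only [Matrix.smul_apply, hM i j hij, smul_zero]
  lie_mem' := by
    intro M N hM hN i j hij
    have h1 : (M * N) i j = 0 := mul_strictUpper hM hN i j hij
    have h2 : (N * M) i j = 0 := mul_strictUpper hN hM i j hij
    simp only [Ring.lie_def, Matrix.sub_apply, h1, h2, sub_zero]

end U3

section Semifield

/-- A (finite-dimensional) semifield structure over `K` on the `K`-vector space `F`: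
a `K`-bilinear multiplication with a two-sided identity and no zero divisors
(multiplication need not be associative). -/
structure SemifieldStruct (K F : Type*) [Field K] [AddCommGroup F] [Module K F] where
  mul : F →ₗ[K] F →ₗ[K] F
  one : F
  one_ne_zero : one ≠ 0
  one_mul : ∀ a : F, mul one a = a
  mul_one : ∀ a : F, mul a one = a
  eq_zero_or_eq_zero_of_mul_eq_zero : ∀ a b : F, mul a b = 0 → a = 0 ∨ b = 0

variable {K F : Type*} [Field K] [AddCommGroup F] [Module K F]

/-- The bracket of the semifield Lie algebra `L(F)`:
`[(a₁,b₁,c₁),(a₂,b₂,c₂)] = (0, 0, a₁·b₂ − a₂·b₁)`. -/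
def lfbr (S : SemifieldStruct K F) (P Q : F × F × F) : F × F × F :=
  (0, 0, S.mul P.1 Q.2.1 - S.mul Q.1 P.2.1)

private lemma lfbr_add_left (S : SemifieldStruct K F) (P Q N : F × F × F) :
    lfbr S (P + Q) N = lfbr S P N + lfbr S Q N := by
  simp only [lfbr, Prod.fst_add, Prod.snd_add, map_add, LinearMap.add_apply,
    Prod.mk_add_mk, Prod.mk.injEq, add_zero]
  and_intros <;> first | trivial | abel

private lemma lfbr_add_right (S : SemifieldStruct K F) (P Q N : F × F × F) :
    lfbr S P (Q + N) = lfbr S P Q + lfbr S P N := by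
  simp only [lfbr, Prod.fst_add, Prod.snd_add, map_add, LinearMap.add_apply,
    Prod.mk_add_mk, Prod.mk.injEq, add_zero]
  and_intros <;> first | trivial | abel

private lemma lfbr_self (S : SemifieldStruct K F) (P : F × F × F) : lfbr S P P = 0 := by
  simp only [lfbr, sub_self, Prod.mk_eq_zero]
  and_intros <;> trivial

private lemma lfbr_leibniz (S : SemifieldStruct K F) (P Q N : F × F × F) :
    lfbr S P (lfbr S Q N) = lfbr S (lfbr S P Q) N + lfbr S Q (lfbr S P N) := by
  simp only [lfbr, map_zero, LinearMap.zero_apply, sub_zero, zero_sub, map_sub,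
    LinearMap.sub_apply, Prod.mk_add_mk, Prod.mk.injEq, add_zero]

/-- The Lie ring structure of the semifield Lie algebra `L(F)` on `F × F × F`. -/
def lfLieRing (S : SemifieldStruct K F) : LieRing (F × F × F) :=
  { (inferInstance : AddCommGroup (F × F × F)) with
    bracket := lfbr S
    add_lie := lfbr_add_left S
    lie_add := lfbr_add_right S
    lie_self := lfbr_self S
    leibniz_lie := lfbr_leibniz S }

private lemma lfbr_smul (S : SemifieldStruct K F) (t : K) (P Q : F × F × F) :
    lfbr S P (t • Q) = t • lfbr S P Q := by
  simp only [lfbr, Prod.smul_fst, Prod.smul_snd, map_smul, LinearMap.smul_apply,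
    Prod.smul_mk, Prod.mk.injEq, smul_zero, smul_sub]

/-- The Lie algebra structure of the semifield Lie algebra `L(F)` on `F × F × F`. -/
def lfLieAlgebra (S : SemifieldStruct K F) :
    letI := lfLieRing S
    LieAlgebra K (F × F × F) :=
  letI := lfLieRing S
  { (inferInstance : Module K (F × F × F)) with
    lie_smul := lfbr_smul S }

end Semifield


section Stmt4Aux

open Module Submodule

variable {K : Type*} [Field K] {L : Type*} [LieRing L] [LieAlgebra K L]

/-- `ad x` as a linear map. -/
private def adl (K : Type*) [Field K] {L : Type*} [LieRing L] [LieAlgebra K L] (x : L) :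
    L →ₗ[K] L where
  toFun y := ⁅x, y⁆
  map_add' := lie_add x
  map_smul' c y := lie_smul c x y

private lemma mem_lieCentralizer_iff {x y : L} : y ∈ lieCentralizer K x ↔ ⁅x, y⁆ = 0 := Iff.rfl

private lemma mem_lieCenterSub_iff {x : L} : x ∈ lieCenterSub K L ↔ ∀ y : L, ⁅x, y⁆ = 0 := Iff.rfl

private lemma ker_adl (x : L) : LinearMap.ker (adl K x) = lieCentralizer K x := by
  ext y; simp [adl, LinearMap.mem_ker, mem_lieCentralizer_iff]

private lemma lie_mem_gammaSub_succ (x : L) {y : L} {k : ℕ} (hy : y ∈ gammaSub K L k) :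
    ⁅x, y⁆ ∈ gammaSub K L (k + 1) :=
  Submodule.subset_span ⟨x, y, hy, rfl⟩

private lemma zero_iff_zero (a b : L) : ⁅a, b⁆ = 0 ↔ ⁅b, a⁆ = 0 := by
  constructor <;> intro h <;> rw [← lie_skew, h, neg_zero]

private lemma lie_zero_of_right_center {w : L} (hw : w ∈ lieCenterSub K L) (u : L) :
    ⁅u, w⁆ = 0 := by
  rw [zero_iff_zero]; exact hw u

private lemma gamma2_le_center (h : gammaSub K L 3 = ⊥) :
    gammaSub K L 2 ≤ lieCenterSub K L := by
  intro w hw y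
  have h1 : ⁅y, w⁆ ∈ gammaSub K L 3 := lie_mem_gammaSub_succ y hw
  rw [h, Submodule.mem_bot] at h1
  rw [zero_iff_zero]; rw [h1]

private lemma card_filter_mem {q : ℕ} [Fintype K] (hK : Fintype.card K = q) [Fintype L]
    [Module.Finite K L] (W : Submodule K L) [DecidablePred (· ∈ W)] :
    (Finset.univ.filter (· ∈ W)).card = q ^ finrank K W := by
  rw [← Fintype.card_subtype, ← hK]
  exact card_eq_pow_finrank

private lemma exists_hyperplane [Module.Finite K L] {W : Submodule K L} (hW : W ≠ ⊤) :
    ∃ H : Submodule K L, W ≤ H ∧ finrank K H + 1 = finrank K L := by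
  have hnt : Nontrivial (L ⧸ W) := Submodule.Quotient.nontrivial_iff.mpr hW
  obtain ⟨v, hv⟩ := exists_ne (0 : L ⧸ W)
  have hφ : ¬∀ φ : Module.Dual K (L ⧸ W), φ v = 0 := by
    rw [Module.forall_dual_apply_eq_zero_iff K v]; exact hv
  push_neg at hφ
  obtain ⟨φ, hφ⟩ := hφ
  set ψ := φ ∘ₗ W.mkQ with hψ
  refine ⟨LinearMap.ker ψ, ?_, ?_⟩
  · intro x hx
    have : W.mkQ x = 0 := (Submodule.Quotient.mk_eq_zero W).mpr hx
    simp [ψ, LinearMap.mem_ker, this]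
  · have h1 := LinearMap.finrank_range_add_finrank_ker ψ
    have h2 : finrank K (LinearMap.range ψ) = 1 := by
      have hle : finrank K (LinearMap.range ψ) ≤ 1 := by
        have := Submodule.finrank_le (LinearMap.range ψ)
        simpa [Module.finrank_self] using this
      have hne : LinearMap.range ψ ≠ ⊥ := by
        obtain ⟨x, hx⟩ := Submodule.mkQ_surjective W v
        intro hb
        have : ψ x = 0 := by
          have : ψ x ∈ LinearMap.range ψ := LinearMap.mem_range_self ψ x
          rwa [hb, Submodule.mem_bot] at this
        apply hφ
        rw [← hx]
        simpa [ψ] using this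
      have h0 : finrank K (LinearMap.range ψ) ≠ 0 := by
        intro h0
        exact hne (Submodule.finrank_eq_zero.mp h0)
      omega
    omega

private lemma double_count {α : Type*} (s t : Finset α) (P : α → α → Prop)
    [∀ x y, Decidable (P x y)] :
    ∑ x ∈ s, (t.filter (fun y => P x y)).card
      = ∑ y ∈ t, (s.filter (fun x => P x y)).card := by
  simp only [Finset.card_filter]
  exact Finset.sum_comm

end Stmt4Aux

/-- For a 3-step nilpotent stem Lie algebra over `𝔽_q` (`q ≥ 3`) of breadth
type `(0, n)`, the set `B_{L'} = {x ∈ L : C_{L'}(x) = Z(L)}` spans `L`. -/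
theorem stmt4 (q n : ℕ) (hq : 3 ≤ q) (hn : 1 ≤ n)
    (K : Type*) [Field K] [Fintype K] (hK : Fintype.card K = q)
    (L : Type*) [LieRing L] [LieAlgebra K L] [Module.Finite K L]
    (h3 : IsThreeStepNilpotentAlg K L) (hstem : IsStemAlg K L)
    (hbt : HasBreadthTypeZeroN K L n) :
    Submodule.span K {x : L | lieCentralizer K x ⊓ derivedSub K L = lieCenterSub K L} = ⊤ := by
  by_contra hspan
  classical
  have : Finite L := Module.finite_of_finite K
  letI : Fintype L := Fintype.ofFinite L
  set Lp := derivedSub K L with hLp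
  set Z := lieCenterSub K L with hZdef
  set d := finrank K L with hd
  set m := finrank K Lp with hm
  set z := finrank K Z with hz
  have hq1 : 1 ≤ q := by omega
  -- basic structure facts
  have hZLp : Z ≤ Lp := hstem
  have hg2Z : gammaSub K L 2 ≤ Z := gamma2_le_center h3.1
  have hLp1 : Lp = gammaSub K L 1 := rfl
  have hbr2 : ∀ x y : L, y ∈ Lp → ⁅x, y⁆ ∈ gammaSub K L 2 := by
    intro x y hy
    exact lie_mem_gammaSub_succ x (by rwa [hLp1] at hy)
  -- a noncentral element of L'
  have hy0 : ∃ y₀, y₀ ∈ Lp ∧ y₀ ∉ Z := by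
    by_contra hcon
    push_neg at hcon
    apply h3.2
    rw [show gammaSub K L 2
        = Submodule.span K {w : L | ∃ x : L, ∃ y ∈ gammaSub K L 1, ⁅x, y⁆ = w} from rfl]
    rw [← le_bot_iff]
    apply Submodule.span_le.mpr
    rintro w ⟨x, y, hy, rfl⟩
    have hyZ : y ∈ Z := hcon y (by rwa [hLp1])
    simp [lie_zero_of_right_center hyZ x]
  obtain ⟨y₀, hy₀Lp, hy₀Z⟩ := hy0
  have hnt : Nontrivial L := nontrivial_of_ne y₀ 0 (fun h => hy₀Z (h ▸ (Z.zero_mem)))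
  -- breadth facts
  have hcent : ∀ x : L, x ∉ Z → finrank K (lieCentralizer K x) + n = d := by
    intro x hx
    have h1 := hbt.2 x hx
    have h2 : finrank K (lieCentralizer K x) ≤ d := Submodule.finrank_le _
    unfold lieBreadth at h1
    omega
  -- rank-nullity for the restriction of ad x to L'
  have hrn : ∀ x : L,
      finrank K (LinearMap.range ((adl K x) ∘ₗ Lp.subtype))
        + finrank K ↥(lieCentralizer K x ⊓ Lp) = m := by
    intro x
    have h1 := LinearMap.finrank_range_add_finrank_ker ((adl K x) ∘ₗ Lp.subtype)
    have h2 : LinearMap.ker ((adl K x) ∘ₗ Lp.subtype)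
        = Submodule.comap Lp.subtype (lieCentralizer K x) := by
      rw [LinearMap.ker_comp, ker_adl]
    have h3 : finrank K (Submodule.comap Lp.subtype (lieCentralizer K x))
        = finrank K ↥(lieCentralizer K x ⊓ Lp) := by
      rw [← Submodule.finrank_map_subtype_eq Lp, Submodule.map_comap_subtype, inf_comm]
    rw [h2, h3] at h1
    exact h1
  -- Step B: no noncentral element can have dim [x, L'] = n
  have stepB : ∀ x : L, x ∉ Z →
      finrank K (LinearMap.range ((adl K x) ∘ₗ Lp.subtype)) ≠ n := by
    intro x hx hrank
    have hc0 : finrank K ↥(lieCentralizer K x) + n = d := hcent x hx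
    have hinf : finrank K ↥(lieCentralizer K x ⊓ Lp) + n = m := by
      have := hrn x; omega
    have hsupinf := Submodule.finrank_sup_add_finrank_inf_eq (lieCentralizer K x) Lp
    have hsuple : finrank K ↥(lieCentralizer K x ⊔ Lp) ≤ d := Submodule.finrank_le _
    have hsup : lieCentralizer K x ⊔ Lp = ⊤ := by
      apply Submodule.eq_top_of_finrank_eq
      omega
    -- every bracket generator of L' is centralized by x
    have hLple : Lp ≤ lieCentralizer K x := by
      rw [hLp1, show gammaSub K L 1
          = Submodule.span K {w : L | ∃ p : L, ∃ r ∈ gammaSub K L 0, ⁅p, r⁆ = w} from rfl]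
      apply Submodule.span_le.mpr
      rintro w ⟨p, r, -, rfl⟩
      obtain ⟨a, ha, y, hy, rfl⟩ := Submodule.mem_sup.mp (hsup ▸ Submodule.mem_top (x := p))
      obtain ⟨b, hb, y', hy', rfl⟩ := Submodule.mem_sup.mp (hsup ▸ Submodule.mem_top (x := r))
      have hxa : ⁅x, a⁆ = 0 := ha
      have hxb : ⁅x, b⁆ = 0 := hb
      show ⁅x, ⁅a + y, b + y'⁆⁆ = 0
      have e1 : ⁅x, ⁅a, b⁆⁆ = 0 := by
        rw [leibniz_lie, hxa, hxb, zero_lie, lie_zero, add_zero]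
      have e2 : ⁅x, ⁅a, y'⁆⁆ = 0 :=
        lie_zero_of_right_center (hg2Z (hbr2 a y' hy')) x
      have e3 : ⁅x, ⁅y, b⁆⁆ = 0 := by
        have : ⁅x, ⁅b, y⁆⁆ = 0 := lie_zero_of_right_center (hg2Z (hbr2 b y hy)) x
        rw [← lie_skew y b, lie_neg, this, neg_zero]
      have e4 : ⁅x, ⁅y, y'⁆⁆ = 0 :=
        lie_zero_of_right_center (hg2Z (hbr2 y y' hy')) x
      rw [add_lie, lie_add, lie_add, lie_add, lie_add, lie_add, e1, e2, e3, e4]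
      simp
    have : lieCentralizer K x ⊓ Lp = Lp := inf_eq_right.mpr hLple
    rw [this] at hinf
    omega
  -- uniform row bound: dim C_{L'}(x) ≥ m - n + 1
  have rowbound : ∀ x : L, m + 1 ≤ finrank K ↥(lieCentralizer K x ⊓ Lp) + n := by
    intro x
    by_cases hx : x ∈ Z
    · have h1 : Lp ≤ lieCentralizer K x := fun y _ => hx y
      have h2 : lieCentralizer K x ⊓ Lp = Lp := inf_eq_right.mpr h1
      rw [h2]
      omega
    · have h1 := hrn x
      have h2 : finrank K (LinearMap.range ((adl K x) ∘ₗ Lp.subtype)) ≤ n := by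
        have hle : LinearMap.range ((adl K x) ∘ₗ Lp.subtype) ≤ LinearMap.range (adl K x) :=
          LinearMap.range_comp_le_range _ _
        have h3 : finrank K (LinearMap.range ((adl K x) ∘ₗ Lp.subtype))
            ≤ finrank K (LinearMap.range (adl K x)) := Submodule.finrank_mono hle
        have h4 := LinearMap.finrank_range_add_finrank_ker (adl K x)
        rw [ker_adl] at h4
        have h5 := hcent x hx
        omega
      have h6 := stepB x hx
      omega
  -- counting machinery
  set Y : Finset L := Finset.univ.filter (· ∈ Lp) with hY
  have hYcard : Y.card = q ^ m := card_filter_mem hK Lp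
  have hZfcard : (Y.filter (· ∈ Z)).card = q ^ z := by
    rw [hY, Finset.filter_filter]
    rw [show (Finset.univ.filter (fun y => y ∈ Lp ∧ y ∈ Z))
        = Finset.univ.filter (· ∈ Z) from Finset.filter_congr
          (fun y _ => ⟨fun h => h.2, fun h => ⟨hZLp h, h⟩⟩)]
    exact card_filter_mem hK Z
  have hsplit := Finset.card_filter_add_card_filter_not (s := Y) (p := (· ∈ Z))
  have hLcard : (Finset.univ : Finset L).card = q ^ d := by
    rw [Finset.card_univ, ← hK]
    exact card_eq_pow_finrank
  -- row identity
  have rowcard : ∀ x : L, (Y.filter (fun y => ⁅x, y⁆ = 0)).card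
      = q ^ finrank K ↥(lieCentralizer K x ⊓ Lp) := by
    intro x
    rw [hY, Finset.filter_filter]
    rw [show (Finset.univ.filter (fun y => y ∈ Lp ∧ ⁅x, y⁆ = 0))
        = Finset.univ.filter (· ∈ lieCentralizer K x ⊓ Lp) from Finset.filter_congr
          (fun y _ => by
            rw [Submodule.mem_inf]
            exact ⟨fun h => ⟨h.2, h.1⟩, fun h => ⟨h.2, h.1⟩⟩)]
    exact card_filter_mem hK _
  -- column identity
  have colcard : ∀ (y : L) (s : Finset L), (s.filter (fun x => ⁅x, y⁆ = 0)).card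
      ≤ q ^ finrank K ↥(lieCentralizer K y) := by
    intro y s
    calc (s.filter (fun x => ⁅x, y⁆ = 0)).card
        ≤ (Finset.univ.filter (fun x => ⁅x, y⁆ = 0)).card :=
          Finset.card_le_card (Finset.filter_subset_filter _ (Finset.subset_univ s))
      _ = q ^ finrank K ↥(lieCentralizer K y) := by
          rw [show (Finset.univ.filter (fun x => ⁅x, y⁆ = 0))
              = Finset.univ.filter (· ∈ lieCentralizer K y) from Finset.filter_congr
                (fun x _ => by
                  rw [zero_iff_zero]
                  exact Iff.rfl)]
          exact card_filter_mem hK _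
  have hcoly : ∀ y : L, y ∈ Lp → y ∉ Z → ∀ s : Finset L,
      (s.filter (fun x => ⁅x, y⁆ = 0)).card ≤ q ^ (d - n) := by
    intro y hyLp hyZ s
    refine (colcard y s).trans (Nat.pow_le_pow_right hq1 ?_)
    have := hcent y hyZ
    omega
  have hc'n : (d - n) + n = d := by
    have := hcent y₀ hy₀Z
    omega
  -- Step C: m ≤ z + n
  have hmzn : m ≤ z + n := by
    by_contra hcon
    push_neg at hcon
    set A := ∑ x ∈ (Finset.univ : Finset L), (Y.filter (fun y => ⁅x, y⁆ = 0)).card with hA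
    have hlow : q ^ d * q ^ (m + 1 - n) ≤ A := by
      rw [← hLcard]
      have := Finset.card_nsmul_le_sum (Finset.univ : Finset L)
        (fun x => (Y.filter (fun y => ⁅x, y⁆ = 0)).card) (q ^ (m + 1 - n))
        (fun x _ => by
          show q ^ (m + 1 - n) ≤ (Y.filter (fun y => ⁅x, y⁆ = 0)).card
          rw [rowcard x]
          exact Nat.pow_le_pow_right hq1 (by have := rowbound x; omega))
      simpa [smul_eq_mul] using this
    set N2 := (Y.filter (fun y => ¬ y ∈ Z)).card with hN2def
    have hN2 : q ^ z + N2 = q ^ m := by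
      rw [hN2def, ← hZfcard, ← hYcard]
      exact hsplit
    have hup : A ≤ q ^ z * q ^ d + N2 * q ^ (d - n) := by
      rw [hA, double_count]
      calc ∑ y ∈ Y, (Finset.univ.filter (fun x => ⁅x, y⁆ = 0)).card
          ≤ ∑ y ∈ Y, (if y ∈ Z then q ^ d else q ^ (d - n)) := by
            apply Finset.sum_le_sum
            intro y hy
            by_cases hyZ : y ∈ Z
            · rw [if_pos hyZ]
              exact (colcard y _).trans
                (Nat.pow_le_pow_right hq1 (Submodule.finrank_le _))
            · rw [if_neg hyZ]
              exact hcoly y (Finset.mem_filter.mp hy).2 hyZ _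
        _ = q ^ z * q ^ d + N2 * q ^ (d - n) := by
            rw [Finset.sum_ite, Finset.sum_const, Finset.sum_const, hZfcard]
            simp [smul_eq_mul, hN2def]
    -- arithmetic contradiction
    have e1 : q ^ d * q ^ (m + 1 - n) = q ^ (m + (d - n)) * q := by
      rw [← pow_add, ← pow_succ]
      congr 1
      omega
    have e2 : q ^ (z + d) * q ≤ q ^ (m + (d - n)) := by
      rw [← pow_succ]
      exact Nat.pow_le_pow_right hq1 (by omega)
    have e3 : N2 * q ^ (d - n) ≤ q ^ (m + (d - n)) := by
      rw [pow_add]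
      exact Nat.mul_le_mul_right _ (by omega)
    have key : q ^ (m + (d - n)) * q ≤ q ^ (z + d) + q ^ (m + (d - n)) := by
      rw [← e1]
      refine hlow.trans (hup.trans ?_)
      rw [← pow_add]
      omega
    have hP1 : 1 ≤ q ^ (z + d) := Nat.one_le_pow _ _ (by omega)
    have hB1 : q ^ (z + d) * 3 ≤ q ^ (z + d) * q := Nat.mul_le_mul_left _ hq
    have hB2 : q ^ (m + (d - n)) * 3 ≤ q ^ (m + (d - n)) * q := Nat.mul_le_mul_left _ hq
    omega
  -- Step D: the span of B is contained in a hyperplane, count again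
  obtain ⟨H, hWH, hHd⟩ := exists_hyperplane hspan
  have hBH : ∀ x : L, x ∉ H → lieCentralizer K x ⊓ Lp ≠ Z := by
    intro x hx heq
    exact hx (hWH (Submodule.subset_span heq))
  set X : Finset L := Finset.univ.filter (· ∉ H) with hX
  have hHcard : (Finset.univ.filter (· ∈ H)).card = q ^ finrank K ↥H :=
    card_filter_mem hK H
  have hXsplit := Finset.card_filter_add_card_filter_not
    (s := (Finset.univ : Finset L)) (p := (· ∈ H))
  have hXcard : X.card + q ^ finrank K ↥H = q ^ d := by
    rw [hX, ← hHcard, ← hLcard]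
    omega
  -- row bound: every x outside H has C_{L'}(x) strictly bigger than Z
  have rowD : ∀ x : L, x ∉ H → q ^ (z + 1) ≤ (Y.filter (fun y => ⁅x, y⁆ = 0)).card := by
    intro x hx
    rw [rowcard x]
    apply Nat.pow_le_pow_right hq1
    have hZle : Z ≤ lieCentralizer K x ⊓ Lp :=
      le_inf (fun y hy => lie_zero_of_right_center hy x) hZLp
    have hlt : Z < lieCentralizer K x ⊓ Lp := lt_of_le_of_ne hZle (Ne.symm (hBH x hx))
    have := Submodule.finrank_lt_finrank_of_lt hlt
    omega
  set N2 := (Y.filter (fun y => ¬ y ∈ Z)).card with hN2def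
  have hN2 : q ^ z + N2 = q ^ m := by
    rw [hN2def, ← hZfcard, ← hYcard]
    exact hsplit
  set A2 := ∑ x ∈ X, (Y.filter (fun y => ⁅x, y⁆ = 0)).card with hA2
  have hlow2 : X.card * q ^ (z + 1) ≤ A2 := by
    have := Finset.card_nsmul_le_sum X
      (fun x => (Y.filter (fun y => ⁅x, y⁆ = 0)).card) (q ^ (z + 1))
      (fun x hxX => by
        show q ^ (z + 1) ≤ (Y.filter (fun y => ⁅x, y⁆ = 0)).card
        exact rowD x (Finset.mem_filter.mp hxX).2)
    simpa [smul_eq_mul] using this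
  have hup2 : A2 ≤ q ^ z * X.card + N2 * q ^ (d - n) := by
    rw [hA2, double_count]
    calc ∑ y ∈ Y, (X.filter (fun x => ⁅x, y⁆ = 0)).card
        ≤ ∑ y ∈ Y, (if y ∈ Z then X.card else q ^ (d - n)) := by
          apply Finset.sum_le_sum
          intro y hy
          by_cases hyZ : y ∈ Z
          · rw [if_pos hyZ]
            exact Finset.card_filter_le _ _
          · rw [if_neg hyZ]
            exact hcoly y (Finset.mem_filter.mp hy).2 hyZ _
      _ = q ^ z * X.card + N2 * q ^ (d - n) := by
          rw [Finset.sum_ite, Finset.sum_const, Finset.sum_const, hZfcard]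
          simp [smul_eq_mul, hN2def]
  -- final arithmetic contradiction
  set u := X.card * q ^ z with hu
  have f1 : u * q ≤ u + N2 * q ^ (d - n) := by
    have : X.card * q ^ (z + 1) = u * q := by
      rw [hu, pow_succ, mul_assoc]
    have h' := hlow2.trans hup2
    rw [this] at h'
    calc u * q ≤ q ^ z * X.card + N2 * q ^ (d - n) := h'
      _ = u + N2 * q ^ (d - n) := by rw [hu, mul_comm]
  have f2 : u + q ^ (finrank K ↥H + z) = q ^ (z + d) := by
    have := congrArg (· * q ^ z) hXcard
    simpa [add_mul, ← pow_add, hu, Nat.add_comm] using this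
  have f3 : N2 * q ^ (d - n) + q ^ (d - n) ≤ q ^ (z + d) := by
    have hmpow : q ^ m ≤ q ^ (z + n) := Nat.pow_le_pow_right hq1 hmzn
    have hz1 : 1 ≤ q ^ z := Nat.one_le_pow _ _ (by omega)
    have hN2le : N2 ≤ q ^ (z + n) - 1 := by omega
    calc N2 * q ^ (d - n) + q ^ (d - n)
        ≤ (q ^ (z + n) - 1) * q ^ (d - n) + q ^ (d - n) :=
          Nat.add_le_add_right (Nat.mul_le_mul_right _ hN2le) _
      _ = q ^ (z + n) * q ^ (d - n) := by
          rw [Nat.sub_mul, one_mul]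
          have h1 : q ^ (d - n) ≤ q ^ (z + n) * q ^ (d - n) :=
            Nat.le_mul_of_pos_left _ (Nat.pow_pos (by omega))
          omega
      _ = q ^ (z + d) := by
          rw [← pow_add]
          congr 1
          omega
  have f4 : q ^ (finrank K ↥H + z) * q = q ^ (z + d) := by
    rw [← pow_succ]
    congr 1
    omega
  have ha1 : 1 ≤ q ^ (finrank K ↥H + z) := Nat.one_le_pow _ _ (by omega)
  have ha3 : q ^ (finrank K ↥H + z) * 3 ≤ q ^ (finrank K ↥H + z) * q :=
    Nat.mul_le_mul_left _ hq
  have hu3 : u * 3 ≤ u * q := Nat.mul_le_mul_left _ hq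
  have hdn1 : 1 ≤ q ^ (d - n) := Nat.one_le_pow _ _ (by omega)
  omega
end

section
/- Let q be an odd prime power and m ≥ 1. In the Lie algebra 𝔤_m, the derived subalgebra is 𝔤_m' = {(0,0,c,d,e) : c,d,e ∈ 𝔽_{q^m}}, and γ_3(𝔤_m) = {(0,0,0,d,e) : d,e ∈ 𝔽_{q^m}} = Z(𝔤_m). -/
open Module

section U3

attribute [local instance 100] LieRing.ofAssociativeRing

end U3

/-- For odd prime power `q` and `m ≥ 1`, in `𝔤_m` one has
`𝔤_m' = {(0,0,c,d,e)}` and `γ₃(𝔤_m) = {(0,0,0,d,e)} = Z(𝔤_m)`.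
(Here `γ₃` is `gammaSub _ _ 2` in our indexing `gammaSub K L k = γ_{k+1}(L)`.) -/
theorem stmt9 (q m : ℕ) (hodd : Odd q) (hm : 1 ≤ m)
    (K : Type*) [Field K] [Fintype K] (hK : Fintype.card K = q)
    (E : Type*) [Field E] [Algebra K E] [FiniteDimensional K E]
    (hE : Module.finrank K E = m) :
    (∀ P : G5 E, P ∈ derivedSub K (G5 E) ↔ P.1 = 0 ∧ P.2.1 = 0) ∧
    (∀ P : G5 E, P ∈ gammaSub K (G5 E) 2 ↔ P.1 = 0 ∧ P.2.1 = 0 ∧ P.2.2.1 = 0) ∧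
    gammaSub K (G5 E) 2 = lieCenterSub K (G5 E) := by
  classical
  -- `2 ≠ 0` in `K` (odd characteristic)
  have h2K : (2 : K) ≠ 0 := by
    intro h
    have hdvd : ringChar K ∣ 2 := by
      have := ringChar.spec K
      exact (CharP.cast_eq_zero_iff K (ringChar K) 2).mp (by exact_mod_cast h)
    have hne1 : ringChar K ≠ 1 := CharP.ringChar_ne_one
    rcases (Nat.dvd_prime Nat.prime_two).mp hdvd with h | h
    · exact hne1 h
    · haveI : CharP K 2 := h ▸ ringChar.charP K
      obtain ⟨n, hp, hcard⟩ := FiniteField.card K 2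
      rw [hK] at hcard
      have : Even q := by
        rw [hcard]
        exact (Nat.even_pow' (by exact_mod_cast n.ne_zero)).mpr (by norm_num)
      exact Nat.not_even_iff_odd.mpr hodd this
  have h2E : (2 : E) ≠ 0 := by
    intro h
    apply h2K
    have : algebraMap K E 2 = algebraMap K E 0 := by
      rw [map_ofNat, map_zero]; exact h
    exact (algebraMap K E).injective this
  -- Part 1: derived subalgebra
  have part1 : ∀ P : G5 E, P ∈ derivedSub K (G5 E) ↔ P.1 = 0 ∧ P.2.1 = 0 := by
    intro P
    constructor
    · intro hP
      refine Submodule.span_induction ?_ ⟨rfl, rfl⟩ ?_ ?_ hP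
      · rintro z ⟨x, y, -, rfl⟩
        exact ⟨rfl, rfl⟩
      · rintro a b - - ⟨ha1, ha2⟩ ⟨hb1, hb2⟩
        exact ⟨by simp [Prod.fst_add, ha1, hb1],
          by simp [Prod.snd_add, ha2, hb2]⟩
      · rintro t a - ⟨ha1, ha2⟩
        exact ⟨by simp [Prod.smul_fst, ha1], by simp [Prod.smul_snd, ha2]⟩
    · obtain ⟨a, b, c, d, e⟩ := P
      rintro ⟨rfl, rfl⟩
      have hB1 : ((0 : E), (0 : E), c, c, c) ∈ derivedSub K (G5 E) := by
        apply Submodule.subset_span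
        refine ⟨(1, 0, 0, 0, 0), (0, c, 0, 0, 0), Submodule.mem_top, ?_⟩
        show G5.br _ _ = _
        simp only [G5.br, Prod.mk.injEq]
        norm_num
      have hB2 : ((0 : E), (0 : E), 0, d - c, e - c) ∈ derivedSub K (G5 E) := by
        apply Submodule.subset_span
        refine ⟨(0, 0, 1, 0, 0), ((d - c) / 2, -(e - c) / 2, 0, 0, 0),
          Submodule.mem_top, ?_⟩
        show G5.br _ _ = _
        simp only [G5.br, Prod.mk.injEq]
        and_intros <;> first | trivial | (field_simp; try ring)
      have heq : ((0 : E), (0 : E), c, d, e)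
          = ((0 : E), (0 : E), c, c, c) + ((0 : E), (0 : E), 0, d - c, e - c) := by
        simp only [Prod.mk_add_mk, Prod.mk.injEq]
        refine ⟨by ring, by ring, by ring, by ring, by ring⟩
      rw [heq]
      exact Submodule.add_mem _ hB1 hB2
    -- done part1
  refine ⟨part1, ?_, ?_⟩
  · -- Part 2: γ₃
    intro P
    constructor
    · intro hP
      refine Submodule.span_induction ?_ ⟨rfl, rfl, rfl⟩ ?_ ?_ hP
      · rintro z ⟨x, y, hy, rfl⟩
        obtain ⟨hy1, hy2⟩ := (part1 y).mp hy
        refine ⟨rfl, rfl, ?_⟩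
        show x.1 * y.2.1 - x.2.1 * y.1 = 0
        rw [hy1, hy2]; ring
      · rintro a b - - ⟨ha1, ha2, ha3⟩ ⟨hb1, hb2, hb3⟩
        refine ⟨?_, ?_, ?_⟩ <;> simp_all
      · rintro t a - ⟨ha1, ha2, ha3⟩
        refine ⟨?_, ?_, ?_⟩ <;> simp_all
    · obtain ⟨a, b, c, d, e⟩ := P
      rintro ⟨rfl, rfl, rfl⟩
      apply Submodule.subset_span
      refine ⟨(-d / 2, e / 2, 0, 0, 0), (0, 0, 1, 0, 0), (part1 _).mpr ⟨rfl, rfl⟩, ?_⟩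
      show G5.br _ _ = _
      simp only [G5.br, Prod.mk.injEq]
      and_intros <;> first | trivial | (field_simp; try ring)
  · -- Part 3: γ₃ = Z
    ext P
    constructor
    · intro hP
      -- reuse part 2 forward: redo via span_induction? instead prove directly
      have h3 : P.1 = 0 ∧ P.2.1 = 0 ∧ P.2.2.1 = 0 := by
        refine Submodule.span_induction ?_ ⟨rfl, rfl, rfl⟩ ?_ ?_ hP
        · rintro z ⟨x, y, hy, rfl⟩
          obtain ⟨hy1, hy2⟩ := (part1 y).mp hy
          refine ⟨rfl, rfl, ?_⟩
          show x.1 * y.2.1 - x.2.1 * y.1 = 0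
          rw [hy1, hy2]; ring
        · rintro a b - - ⟨ha1, ha2, ha3⟩ ⟨hb1, hb2, hb3⟩
          refine ⟨?_, ?_, ?_⟩ <;> simp_all
        · rintro t a - ⟨ha1, ha2, ha3⟩
          refine ⟨?_, ?_, ?_⟩ <;> simp_all
      obtain ⟨a, b, c, d, e⟩ := P
      obtain ⟨rfl, rfl, rfl⟩ := h3
      intro y
      obtain ⟨x, y', z, u, v⟩ := y
      show G5.br _ _ = _
      simp only [G5.br, Prod.mk_eq_zero]
      norm_num
    · intro hP
      obtain ⟨a, b, c, d, e⟩ := P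
      have ha : a = 0 := by
        have h := congrArg (fun z : G5 E => z.2.2.1) (hP (0, 1, 0, 0, 0))
        simpa [G5.br] using h
      have hb : b = 0 := by
        have h := congrArg (fun z : G5 E => z.2.2.1) (hP (1, 0, 0, 0, 0))
        simp only [G5.bracket_def, G5.br, Prod.snd_zero, Prod.fst_zero] at h
        linear_combination -h
      have hc : c = 0 := by
        have h := congrArg (fun z : G5 E => z.2.2.2.1) (hP (1, 0, 0, 0, 0))
        simp only [G5.bracket_def, G5.br, Prod.snd_zero, Prod.fst_zero] at h
        have h2c : 2 * c = 0 := by linear_combination h + (1 : E) * hb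
        rcases mul_eq_zero.mp h2c with h' | h'
        · exact absurd h' h2E
        · exact h'
      subst ha; subst hb; subst hc
      apply Submodule.subset_span
      refine ⟨(-d / 2, e / 2, 0, 0, 0), (0, 0, 1, 0, 0), (part1 _).mpr ⟨rfl, rfl⟩, ?_⟩
      show G5.br _ _ = _
      simp only [G5.br, Prod.mk.injEq]
      and_intros <;> first | trivial | (field_simp; try ring)
end

section
/- Let q be an odd prime power and m ≥ 1. If α = (a,b,c,d,e) ∈ 𝔤_m with (a,b) ≠ (0,0) (i.e., α ∉ 𝔤_m'), then the centralizer C_{𝔤_m}(α) has dimension 3m over 𝔽_q, so the breadth of α is 2m. -/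
open Module

section U3

attribute [local instance 100] LieRing.ofAssociativeRing

end U3

section Stmt11Aux

open Module

lemma two_ne_zero_of_odd_card' {K : Type*} [Field K] [Fintype K] {q : ℕ}
    (hK : Fintype.card K = q) (hodd : Odd q) : (2 : K) ≠ 0 := by
  intro h
  haveI : CharP K (ringChar K) := ringChar.charP K
  obtain ⟨n, hp, hcard⟩ := FiniteField.card K (ringChar K)
  have hdvd : ringChar K ∣ 2 := (CharP.cast_eq_zero_iff K (ringChar K) 2).mp (by exact_mod_cast h)
  have h2 : ringChar K = 2 := (Nat.prime_dvd_prime_iff_eq hp Nat.prime_two).mp hdvd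
  rw [hK, h2] at hcard
  have heven : Even q := by
    rw [hcard]
    exact (Nat.even_pow' (by positivity)).mpr even_two
  rw [Nat.even_iff] at heven
  rw [Nat.odd_iff] at hodd
  omega

variable {K E : Type*} [Field K] [Field E] [Algebra K E]

lemma two_ne_zero_E' (h2 : (2 : K) ≠ 0) : (2 : E) ≠ 0 := by
  intro h
  apply h2
  apply (algebraMap K E).injective
  rw [map_ofNat, map_zero]
  exact h

/-- `(x, u, v) ↦ (x, s*x, t*x, u, v)` as a `K`-linear map. -/
def psiA (s t : E) : (E × E × E) →ₗ[K] G5 E where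
  toFun w := (w.1, s * w.1, t * w.1, w.2.1, w.2.2)
  map_add' w₁ w₂ := by
    simp only [Prod.fst_add, Prod.snd_add, Prod.mk_add_mk, Prod.mk.injEq, mul_add]
  map_smul' k w := by
    simp only [Prod.smul_fst, Prod.smul_snd, Prod.smul_mk, RingHom.id_apply, Prod.mk.injEq,
      mul_smul_comm]

/-- `(y, u, v) ↦ (s*y, y, t*y, u, v)` as a `K`-linear map. -/
def psiB (s t : E) : (E × E × E) →ₗ[K] G5 E where
  toFun w := (s * w.1, w.1, t * w.1, w.2.1, w.2.2)
  map_add' w₁ w₂ := by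
    simp only [Prod.fst_add, Prod.snd_add, Prod.mk_add_mk, Prod.mk.injEq, mul_add]
  map_smul' k w := by
    simp only [Prod.smul_fst, Prod.smul_snd, Prod.smul_mk, RingHom.id_apply, Prod.mk.injEq,
      mul_smul_comm]

lemma psiA_inj (s t : E) : Function.Injective (psiA s t : (E × E × E) →ₗ[K] G5 E) := by
  intro w₁ w₂ h
  simp only [psiA, LinearMap.coe_mk, AddHom.coe_mk, Prod.mk.injEq] at h
  exact Prod.ext h.1 (Prod.ext h.2.2.2.1 h.2.2.2.2)

lemma psiB_inj (s t : E) : Function.Injective (psiB s t : (E × E × E) →ₗ[K] G5 E) := by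
  intro w₁ w₂ h
  simp only [psiB, LinearMap.coe_mk, AddHom.coe_mk, Prod.mk.injEq] at h
  exact Prod.ext h.2.1 (Prod.ext h.2.2.2.1 h.2.2.2.2)

lemma finrank_of_range_eq [FiniteDimensional K E] {α : G5 E} (f : (E × E × E) →ₗ[K] G5 E)
    (hinj : Function.Injective f) (h : lieCentralizer K α = LinearMap.range f) :
    finrank K (lieCentralizer K α) = 3 * finrank K E := by
  rw [h, LinearMap.finrank_range_of_inj hinj, Module.finrank_prod, Module.finrank_prod]
  ring

lemma finrank_G5 [FiniteDimensional K E] : finrank K (G5 E) = 5 * finrank K E := by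
  show finrank K (E × E × E × E × E) = 5 * finrank K E
  rw [Module.finrank_prod, Module.finrank_prod, Module.finrank_prod, Module.finrank_prod]
  ring

end Stmt11Aux

/-- For odd prime power `q`, `m ≥ 1` and `α = (a,b,c,d,e) ∈ 𝔤_m` with
`(a,b) ≠ (0,0)` (i.e. `α ∉ 𝔤_m'`), the centralizer of `α` has dimension `3m` over `𝔽_q`,
so the breadth of `α` is `2m`. -/
theorem stmt11 (q m : ℕ) (hodd : Odd q) (hm : 1 ≤ m)
    (K : Type*) [Field K] [Fintype K] (hK : Fintype.card K = q)
    (E : Type*) [Field E] [Algebra K E] [FiniteDimensional K E]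
    (hE : Module.finrank K E = m)
    (α : G5 E) (hab : ¬ (α.1 = 0 ∧ α.2.1 = 0)) :
    finrank K (lieCentralizer K α) = 3 * m ∧ lieBreadth K α = 2 * m := by

  obtain ⟨a, b, c, d, e⟩ := α
  have h2K : (2 : K) ≠ 0 := two_ne_zero_of_odd_card' hK hodd
  have h2 : (2 : E) ≠ 0 := two_ne_zero_E' (E := E) h2K
  have hab' : a ≠ 0 ∨ b ≠ 0 := by
    by_cases ha : a = 0
    · right; intro hb; exact hab ⟨ha, hb⟩
    · left; exact ha
  have hcent : finrank K (lieCentralizer K ((a, b, c, d, e) : G5 E)) = 3 * m := by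
    rcases hab' with ha | hb
    · rw [← hE]
      refine finrank_of_range_eq (psiA (a⁻¹ * b) (a⁻¹ * c)) (psiA_inj _ _) ?_
      ext β
      obtain ⟨x, y, z, u, v⟩ := β
      constructor
      · intro hmem
        have h0 : G5.br (a, b, c, d, e) (x, y, z, u, v) = 0 := hmem
        simp only [G5.br, Prod.mk_eq_zero] at h0
        obtain ⟨-, -, e1, e2, e3⟩ := h0
        have hy : y = a⁻¹ * b * x := by
          apply mul_left_cancel₀ ha
          rw [show a * (a⁻¹ * b * x) = a * a⁻¹ * (b * x) by ring, mul_inv_cancel₀ ha, one_mul]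
          linear_combination e1
        have hz : z = a⁻¹ * c * x := by
          have h4 : 2 * (a * z - c * x) = 0 := by linear_combination e1 - e2
          have h5 : a * z - c * x = 0 := by
            rcases mul_eq_zero.mp h4 with h | h
            · exact absurd h h2
            · exact h
          apply mul_left_cancel₀ ha
          rw [show a * (a⁻¹ * c * x) = a * a⁻¹ * (c * x) by ring, mul_inv_cancel₀ ha, one_mul]
          linear_combination h5
        refine LinearMap.mem_range.mpr ⟨(x, u, v), ?_⟩
        show ((x, a⁻¹ * b * x, a⁻¹ * c * x, u, v) : G5 E) = (x, y, z, u, v)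
        rw [hy, hz]
      · intro hmem
        obtain ⟨⟨x', u', v'⟩, hw⟩ := LinearMap.mem_range.mp hmem
        have hw' : ((x', a⁻¹ * b * x', a⁻¹ * c * x', u', v') : G5 E) = (x, y, z, u, v) := hw
        simp only [Prod.mk.injEq] at hw'
        show G5.br (a, b, c, d, e) (x, y, z, u, v) = 0
        obtain ⟨rfl, rfl, rfl, -, -⟩ := hw'
        simp only [G5.br, Prod.mk_eq_zero]
        refine ⟨trivial, trivial, ?_, ?_, ?_⟩ <;> field_simp <;> ring
    · rw [← hE]
      refine finrank_of_range_eq (psiB (b⁻¹ * a) (b⁻¹ * c)) (psiB_inj _ _) ?_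
      ext β
      obtain ⟨x, y, z, u, v⟩ := β
      constructor
      · intro hmem
        have h0 : G5.br (a, b, c, d, e) (x, y, z, u, v) = 0 := hmem
        simp only [G5.br, Prod.mk_eq_zero] at h0
        obtain ⟨-, -, e1, e2, e3⟩ := h0
        have hx : x = b⁻¹ * a * y := by
          apply mul_left_cancel₀ hb
          rw [show b * (b⁻¹ * a * y) = b * b⁻¹ * (a * y) by ring, mul_inv_cancel₀ hb, one_mul]
          linear_combination -e1
        have hz : z = b⁻¹ * c * y := by
          have h4 : 2 * (b * z - c * y) = 0 := by linear_combination e3 - e1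
          have h5 : b * z - c * y = 0 := by
            rcases mul_eq_zero.mp h4 with h | h
            · exact absurd h h2
            · exact h
          apply mul_left_cancel₀ hb
          rw [show b * (b⁻¹ * c * y) = b * b⁻¹ * (c * y) by ring, mul_inv_cancel₀ hb, one_mul]
          linear_combination h5
        refine LinearMap.mem_range.mpr ⟨(y, u, v), ?_⟩
        show ((b⁻¹ * a * y, y, b⁻¹ * c * y, u, v) : G5 E) = (x, y, z, u, v)
        rw [hx, hz]
      · intro hmem
        obtain ⟨⟨y', u', v'⟩, hw⟩ := LinearMap.mem_range.mp hmem
        have hw' : ((b⁻¹ * a * y', y', b⁻¹ * c * y', u', v') : G5 E) = (x, y, z, u, v) := hw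
        simp only [Prod.mk.injEq] at hw'
        show G5.br (a, b, c, d, e) (x, y, z, u, v) = 0
        obtain ⟨rfl, rfl, rfl, -, -⟩ := hw'
        simp only [G5.br, Prod.mk_eq_zero]
        refine ⟨trivial, trivial, ?_, ?_, ?_⟩ <;> field_simp <;> ring
  refine ⟨hcent, ?_⟩
  have h5 : finrank K (G5 E) = 5 * m := by rw [finrank_G5, hE]
  rw [lieBreadth, h5, hcent]
  omega
end

section
/- Let F₁ and F₂ be finite semifields over 𝔽_q that are isotopic, i.e., there exist additive isomorphisms α, β, γ : F₁ → F₂ with γ(a ·₁ b) = α(a) ·₂ β(b) for all a, b ∈ F₁. Then the semifield Lie algebras L(F₁) and L(F₂) are isomorphic as Lie rings, i.e., there is an additive bijection L(F₁) → L(F₂) preserving the Lie brackets. -/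
open Module

section U3

attribute [local instance 100] LieRing.ofAssociativeRing

end U3

/-- Isotopic finite semifields over `𝔽_q` give rise to isomorphic semifield
Lie rings: there is an additive bijection `L(F₁) → L(F₂)` preserving the Lie brackets. -/
theorem stmt14 (q : ℕ)
    (K : Type*) [Field K] [Fintype K] (hK : Fintype.card K = q)
    (F₁ : Type*) [AddCommGroup F₁] [Module K F₁] [Module.Finite K F₁]
    (F₂ : Type*) [AddCommGroup F₂] [Module K F₂] [Module.Finite K F₂]
    (S₁ : SemifieldStruct K F₁) (S₂ : SemifieldStruct K F₂)
    (α β γ : F₁ ≃+ F₂)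
    (hiso : ∀ a b : F₁, γ (S₁.mul a b) = S₂.mul (α a) (β b)) :
    ∃ e : (F₁ × F₁ × F₁) ≃+ (F₂ × F₂ × F₂),
      ∀ P Q : F₁ × F₁ × F₁, e (lfbr S₁ P Q) = lfbr S₂ (e P) (e Q) := by
  refine ⟨α.prodCongr (β.prodCongr γ), ?_⟩
  intro P Q
  have h : ∀ R : F₁ × F₁ × F₁, (α.prodCongr (β.prodCongr γ)) R = (α R.1, β R.2.1, γ R.2.2) :=
    fun _ => rfl
  simp only [lfbr, h, map_sub, map_zero, hiso]
end
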